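/- Suppose (φ_m)_{m∈ℤ} satisfies |φ_m| ≤ c|m|^{δ-α} for m ≠ 0 with α ∈ (1,2), β = α - 1, 0 < δ < β/2, and (Δ^{(2)}_m) satisfies |Δ^{(2)}_m| ≤ c(1+|m|)^{δ-1}. Then |Σ_{m∈ℤ} m φ_m Δ^{(2)}_{n-m}| ≤ C |n|^{2δ-β} for all large |n|. -/

import Mathlib

private lemma kce_step_down {a : ℝ} (ha0 : 0 < a) (ha1 : a < 1) {x : ℝ} (hx : 1 ≤ x) :
    (1 - a) * x ^ (-a) ≤ x ^ (1-a) - (x-1) ^ (1-a) := by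
  have hx0 : (0:ℝ) < x := lt_of_lt_of_le one_pos hx
  have hinv : 1/x ≤ 1 := by rw [div_le_one hx0]; exact hx
  have h0 : (0:ℝ) ≤ 1 - 1/x := by linarith
  have hmul : x * (1 - 1/x) = x - 1 := by field_simp
  have h1 : (x - 1) ^ (1-a) = x ^ (1-a) * (1 - 1/x) ^ (1-a) := by
    rw [← Real.mul_rpow hx0.le h0, hmul]
  have h2 : (1 - 1/x) ^ (1-a) ≤ 1 + (1-a) * (-(1/x)) := by
    have := rpow_one_add_le_one_add_mul_self (s := -(1/x))
      (by linarith) (p := 1-a) (by linarith) (by linarith)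
    rw [show (1:ℝ) + -(1/x) = 1 - 1/x by ring] at this
    exact this
  have h3 : x ^ (1-a) * (1/x) = x ^ (-a) := by
    rw [one_div, ← Real.rpow_neg_one x, ← Real.rpow_add hx0]
    congr 1; ring
  have hxp : (0:ℝ) ≤ x ^ (1-a) := Real.rpow_nonneg hx0.le _
  have h4 : (x-1)^(1-a) ≤ x^(1-a) * (1 + (1-a) * (-(1/x))) := by
    rw [h1]; exact mul_le_mul_of_nonneg_left h2 hxp
  have h5 : x^(1-a) * (1 + (1-a) * (-(1/x))) = x^(1-a) - (1-a) * (x^(1-a) * (1/x)) := by ring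
  rw [h5, h3] at h4
  linarith

private lemma kce_step_up {q : ℝ} (hq0 : 0 < q) (hq1 : q < 1) {x : ℝ} (hx : 2 ≤ x) :
    q * x ^ (-(1+q)) ≤ (x-1) ^ (-q) - x ^ (-q) := by
  have hx0 : (0:ℝ) < x := by linarith
  have hx1 : (0:ℝ) < x - 1 := by linarith
  have ht0 : 0 < 1/x := by positivity
  have ht2 : 1/x ≤ 1/2 := by
    rw [div_le_div_iff₀ hx0 two_pos]; linarith
  have hb : (1 - 1/x) ^ q ≤ 1 - q * (1/x) := by
    have := rpow_one_add_le_one_add_mul_self (s := -(1/x))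
      (by linarith) (p := q) hq0.le hq1.le
    rw [show (1:ℝ) + -(1/x) = 1 - 1/x by ring] at this
    linarith
  have hmul : x * (1 - 1/x) = x - 1 := by field_simp
  have h1 : (x-1) ^ q = x ^ q * (1 - 1/x) ^ q := by
    rw [← Real.mul_rpow hx0.le (by linarith), hmul]
  have hq' : 0 < 1 - q * (1/x) := by nlinarith
  have hxq : 0 < x ^ q := Real.rpow_pos_of_pos hx0 q
  have h2 : (x-1) ^ q ≤ x ^ q * (1 - q * (1/x)) := by
    rw [h1]; exact mul_le_mul_of_nonneg_left hb hxq.le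
  have hpos : 0 < (x-1) ^ q := Real.rpow_pos_of_pos hx1 q
  have h3 : (x ^ q * (1 - q*(1/x)))⁻¹ ≤ ((x-1) ^ q)⁻¹ := by
    apply inv_anti₀ hpos h2
  have hinv : (1 + q * (1/x)) ≤ (1 - q*(1/x))⁻¹ := by
    rw [← one_div, le_div_iff₀ hq']
    nlinarith [sq_nonneg (q * (1/x))]
  have h4 : x ^ (-q) * (1 + q * (1/x)) ≤ (x ^ q * (1 - q*(1/x)))⁻¹ := by
    rw [mul_inv, Real.rpow_neg hx0.le]
    exact mul_le_mul_of_nonneg_left hinv (by positivity)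
  have h5 : q * x ^ (-(1+q)) = x ^ (-q) * (q * (1/x)) := by
    rw [show -(1+q) = -q + -1 by ring, Real.rpow_add hx0, Real.rpow_neg_one]
    field_simp
  have h6 : (x-1) ^ (-q) = ((x-1)^q)⁻¹ := Real.rpow_neg hx1.le q
  have h7 : x ^ (-q) * (1 + q * (1/x)) = x ^ (-q) + x ^ (-q) * (q * (1/x)) := by ring
  rw [h7, ← h5] at h4
  rw [h6]
  linarith

private lemma kce_sum_rpow_le {a : ℝ} (ha0 : 0 < a) (ha1 : a < 1) :
    ∀ K : ℕ, ∑ i ∈ Finset.range (K+1), (i:ℝ) ^ (-a) ≤ (K:ℝ) ^ (1-a) / (1-a) := by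
  have h1a : (0:ℝ) < 1 - a := by linarith
  intro K
  induction K with
  | zero =>
    simp [Real.zero_rpow (neg_ne_zero.mpr ha0.ne'),
      Real.zero_rpow (by positivity : (1:ℝ)-a ≠ 0)]
  | succ K ih =>
    rw [Finset.sum_range_succ]
    have hK1 : (1:ℝ) ≤ (K:ℝ) + 1 := by
      have : (0:ℝ) ≤ (K:ℝ) := Nat.cast_nonneg K
      linarith
    have hstep := kce_step_down ha0 ha1 hK1
    rw [show (K:ℝ) + 1 - 1 = (K:ℝ) by ring] at hstep
    have hdiv : ((K:ℝ)+1) ^ (-a) ≤ ((K:ℝ)+1) ^ (1-a) / (1-a) - (K:ℝ) ^ (1-a) / (1-a) := by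
      rw [← sub_div, le_div_iff₀ h1a]; linarith
    push_cast
    linarith

private lemma kce_natA {a R : ℝ} (ha0 : 0 < a) (ha1 : a < 1) (hR : 0 ≤ R) (K : ℕ) :
    ∑ i ∈ Finset.range K, (if 2*(i:ℝ) ≤ R then (i:ℝ) ^ (-a) else 0)
      ≤ (R/2) ^ (1-a) / (1-a) := by
  classical
  have h1a : (0:ℝ) < 1 - a := by linarith
  have hsub : (Finset.range K).filter (fun i : ℕ => 2*(i:ℝ) ≤ R) ⊆ Finset.range (⌊R/2⌋₊ + 1) := by
    intro i hi
    simp only [Finset.mem_filter, Finset.mem_range] at hi ⊢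
    have h2 : (i:ℝ) ≤ R/2 := by linarith [hi.2]
    exact Nat.lt_succ_of_le (Nat.le_floor h2)
  calc ∑ i ∈ Finset.range K, (if 2*(i:ℝ) ≤ R then (i:ℝ) ^ (-a) else 0)
      = ∑ i ∈ (Finset.range K).filter (fun i : ℕ => 2*(i:ℝ) ≤ R), (i:ℝ)^(-a) :=
        (Finset.sum_filter _ _).symm
    _ ≤ ∑ i ∈ Finset.range (⌊R/2⌋₊+1), (i:ℝ)^(-a) :=
        Finset.sum_le_sum_of_subset_of_nonneg hsub
          (fun i _ _ => Real.rpow_nonneg (Nat.cast_nonneg i) _)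
    _ ≤ ((⌊R/2⌋₊:ℕ):ℝ)^(1-a)/(1-a) := kce_sum_rpow_le ha0 ha1 _
    _ ≤ (R/2)^(1-a)/(1-a) := by
        apply (div_le_div_iff_of_pos_right h1a).mpr
        exact Real.rpow_le_rpow (Nat.cast_nonneg _) (Nat.floor_le (by positivity)) (by linarith)

private lemma kce_natB {b R : ℝ} (hb0 : 0 < b) (hb1 : b < 1) (hR : 0 ≤ R) (K : ℕ) :
    ∑ i ∈ Finset.range K, (if 2*(i:ℝ) ≤ R then (1+(i:ℝ)) ^ (-b) else 0)
      ≤ 1 + (R/2) ^ (1-b) / (1-b) := by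
  classical
  have hpt : ∀ i ∈ Finset.range K, (if 2*(i:ℝ) ≤ R then (1+(i:ℝ)) ^ (-b) else 0)
      ≤ (if i = 0 then (1:ℝ) else 0) + (if 2*(i:ℝ) ≤ R then (i:ℝ) ^ (-b) else 0) := by
    intro i _
    rcases eq_or_ne i 0 with rfl | hi
    · simp only [if_pos rfl, Nat.cast_zero]
      split
      · rw [Real.zero_rpow (neg_ne_zero.mpr hb0.ne')]
        norm_num
      · norm_num
    · simp only [if_neg hi, zero_add]
      split
      · apply Real.rpow_le_rpow_of_nonpos
        · exact_mod_cast Nat.pos_of_ne_zero hi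
        · linarith [Nat.cast_nonneg (α := ℝ) i]
        · linarith
      · exact le_rfl
  calc ∑ i ∈ Finset.range K, (if 2*(i:ℝ) ≤ R then (1+(i:ℝ)) ^ (-b) else 0)
      ≤ ∑ i ∈ Finset.range K, ((if i = 0 then (1:ℝ) else 0)
          + (if 2*(i:ℝ) ≤ R then (i:ℝ) ^ (-b) else 0)) := Finset.sum_le_sum hpt
    _ = (∑ i ∈ Finset.range K, if i = 0 then (1:ℝ) else 0)
          + ∑ i ∈ Finset.range K, (if 2*(i:ℝ) ≤ R then (i:ℝ) ^ (-b) else 0) :=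
        Finset.sum_add_distrib
    _ ≤ 1 + (R/2) ^ (1-b) / (1-b) := by
        apply add_le_add _ (kce_natA hb0 hb1 hR K)
        rw [Finset.sum_ite_eq' (Finset.range K) 0 (fun _ => (1:ℝ))]
        split <;> norm_num

private lemma kce_tail {q : ℝ} (hq0 : 0 < q) (hq1 : q < 1) {M : ℕ} (hM : 1 ≤ M) (K : ℕ) :
    ∑ i ∈ Finset.range K, (if M < i then (i:ℝ) ^ (-(1+q)) else 0) ≤ (M:ℝ) ^ (-q) / q := by
  classical
  have hM1 : (1:ℝ) ≤ (M:ℝ) := by exact_mod_cast hM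
  have main : ∀ L : ℕ, ∑ i ∈ Finset.range (M+1+L), (if M < i then (i:ℝ)^(-(1+q)) else 0)
      ≤ ((M:ℝ)^(-q) - ((M+L:ℕ):ℝ)^(-q)) / q := by
    intro L
    induction L with
    | zero =>
      rw [Finset.sum_eq_zero]
      · simp
      · intro i hi
        rw [if_neg]
        simp only [Finset.mem_range] at hi
        omega
    | succ L ih =>
      rw [show M+1+(L+1) = (M+1+L)+1 by omega, Finset.sum_range_succ, if_pos (by omega : M < M+1+L)]
      have hx2 : (2:ℝ) ≤ ((M+1+L:ℕ):ℝ) := by push_cast; linarith [Nat.cast_nonneg (α := ℝ) L]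
      have hstep := kce_step_up hq0 hq1 hx2
      rw [show ((M+1+L:ℕ):ℝ) - 1 = ((M+L:ℕ):ℝ) by push_cast; ring] at hstep
      have hterm : ((M+1+L:ℕ):ℝ)^(-(1+q)) ≤ (((M+L:ℕ):ℝ)^(-q) - ((M+1+L:ℕ):ℝ)^(-q))/q := by
        rw [le_div_iff₀ hq0]; linarith
      calc _ ≤ ((M:ℝ)^(-q) - ((M+L:ℕ):ℝ)^(-q))/q
            + (((M+L:ℕ):ℝ)^(-q) - ((M+1+L:ℕ):ℝ)^(-q))/q := add_le_add ih hterm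
        _ = ((M:ℝ)^(-q) - ((M+(L+1):ℕ):ℝ)^(-q))/q := by
            rw [← add_div]
            congr 1
            push_cast
            ring_nf
  have hnn : ∀ i : ℕ, 0 ≤ (if M < i then (i:ℝ)^(-(1+q)) else 0) := by
    intro i; split
    · exact Real.rpow_nonneg (Nat.cast_nonneg _) _
    · exact le_rfl
  calc ∑ i ∈ Finset.range K, (if M < i then (i:ℝ) ^ (-(1+q)) else 0)
      ≤ ∑ i ∈ Finset.range (M+1+K), (if M < i then (i:ℝ) ^ (-(1+q)) else 0) :=
        Finset.sum_le_sum_of_subset_of_nonneg (Finset.range_subset_range.mpr (by omega))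
          (fun i _ _ => hnn i)
    _ ≤ ((M:ℝ)^(-q) - ((M+K:ℕ):ℝ)^(-q))/q := main K
    _ ≤ (M:ℝ)^(-q)/q := by
        have h0 : (0:ℝ) ≤ ((M+K:ℕ):ℝ)^(-q) := Real.rpow_nonneg (Nat.cast_nonneg _) _
        apply (div_le_div_iff_of_pos_right hq0).mpr
        linarith

private lemma kce_natC {q R : ℝ} (hq0 : 0 < q) (hq1 : q < 1) (hR : 4 ≤ R) (K : ℕ) :
    ∑ i ∈ Finset.range K, (if R < 2*(i:ℝ) then (i:ℝ) ^ (-(1+q)) else 0)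
      ≤ (R/4) ^ (-q) / q := by
  classical
  set M := ⌊R/2⌋₊ with hM
  have hM1 : 1 ≤ M := Nat.le_floor (by push_cast; linarith)
  have hMle : (M:ℝ) ≤ R/2 := Nat.floor_le (by linarith)
  have hMgt : R/4 ≤ (M:ℝ) := by
    have := Nat.sub_one_lt_floor (R/2)
    rw [← hM] at this
    linarith
  have hpt : ∀ i ∈ Finset.range K, (if R < 2*(i:ℝ) then (i:ℝ)^(-(1+q)) else 0)
      ≤ (if M < i then (i:ℝ)^(-(1+q)) else 0) := by
    intro i _
    split
    · rename_i h
      have hMi : M < i := by exact_mod_cast (show (M:ℝ) < (i:ℝ) by linarith)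
      rw [if_pos hMi]
    · split
      · exact Real.rpow_nonneg (Nat.cast_nonneg _) _
      · exact le_rfl
  calc ∑ i ∈ Finset.range K, (if R < 2*(i:ℝ) then (i:ℝ) ^ (-(1+q)) else 0)
      ≤ ∑ i ∈ Finset.range K, (if M < i then (i:ℝ)^(-(1+q)) else 0) := Finset.sum_le_sum hpt
    _ ≤ (M:ℝ)^(-q)/q := kce_tail hq0 hq1 hM1 K
    _ ≤ (R/4)^(-q)/q := by
        apply (div_le_div_iff_of_pos_right hq0).mpr
        exact Real.rpow_le_rpow_of_nonpos (by linarith) hMgt (by linarith)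

private lemma kce_shift_sum_le {g : ℕ → ℝ} (hg : ∀ i, 0 ≤ g i) {B : ℝ}
    (h : ∀ K, ∑ i ∈ Finset.range K, g i ≤ B) :
    ∀ K, ∑ i ∈ Finset.range K, g (i+1) ≤ B := by
  intro K
  have h2 := h (K+1)
  rw [Finset.sum_range_succ'] at h2
  linarith [hg 0]

private lemma kce_tsum_int_le (F : ℤ → ℝ) (hnn : ∀ m, 0 ≤ F m) (B : ℝ)
    (hp : ∀ K, ∑ i ∈ Finset.range K, F i ≤ B)
    (hm : ∀ K, ∑ i ∈ Finset.range K, F (-(i+1)) ≤ B) :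
    Summable F ∧ ∑' m, F m ≤ B + B := by
  have s1 : Summable (fun i : ℕ => F i) := summable_of_sum_range_le (fun i => hnn _) hp
  have s2 : Summable (fun i : ℕ => F (-(i+1))) := summable_of_sum_range_le (fun i => hnn _) hm
  refine ⟨Summable.of_nat_of_neg_add_one s1 s2, ?_⟩
  rw [tsum_of_nat_of_neg_add_one s1 s2]
  exact add_le_add (s1.tsum_le_of_sum_range_le hp) (s2.tsum_le_of_sum_range_le hm)

theorem key_convolution_estimate
    (α β δ : ℝ) (hα1 : 1 < α) (hα2 : α < 2) (hβ : β = α - 1)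
    (hδ0 : 0 < δ) (hδ : δ < β / 2)
    (φ : ℤ → ℝ) (c : ℝ)
    (hφ : ∀ m : ℤ, m ≠ 0 → |φ m| ≤ c * Real.rpow |(m : ℝ)| (δ - α))
    (Δ2 : ℤ → ℝ)
    (hΔ2 : ∀ m : ℤ, |Δ2 m| ≤ c * Real.rpow (1 + |(m : ℝ)|) (δ - 1)) :
    ∃ C : ℝ, ∃ N : ℕ, ∀ n : ℤ, (N : ℝ) ≤ |(n : ℝ)| →
      |∑' m : ℤ, (m : ℝ) * φ m * Δ2 (n - m)| ≤ C * Real.rpow |(n : ℝ)| (2 * δ - β) := by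
  classical
  simp only [Real.rpow_eq_pow] at hφ hΔ2
  have hβ0 : 0 < β := by rw [hβ]; linarith
  have hβ1 : β < 1 := by rw [hβ]; linarith
  have hc : 0 ≤ c := by
    have h := hΔ2 0
    simp only [Int.cast_zero, abs_zero, add_zero, Real.one_rpow, mul_one] at h
    exact (abs_nonneg _).trans h
  set a := β - δ with ha
  set b := 1 - δ with hb'
  set q := β - 2*δ with hq'
  have ha0 : (0:ℝ) < a := by rw [ha]; linarith
  have ha1 : a < 1 := by rw [ha]; linarith
  have hb0 : (0:ℝ) < b := by rw [hb']; linarith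
  have hb1 : b < 1 := by rw [hb']; linarith
  have hq0 : (0:ℝ) < q := by rw [hq']; linarith
  have hq1 : q < 1 := by rw [hq']; linarith
  have hqa : q < a := by rw [hq', ha]; linarith
  refine ⟨c^2 * (2*2^q/(1-a) + (2+2/(1-b))*2^q + 2*3^b*4^q/q), 4, ?_⟩
  intro n hn
  set R := |(n:ℝ)| with hR'
  have hR4 : (4:ℝ) ≤ R := by
    push_cast at hn
    exact hn
  have hR0 : (0:ℝ) < R := by linarith
  have hR2 : (2:ℝ) ≤ R/2 := by linarith
  have hR20 : (0:ℝ) < R/2 := by linarith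
  set gA : ℤ → ℝ := fun m => if 2*|(m:ℝ)| ≤ R then |(m:ℝ)| ^ (-a) else 0 with hgA
  set gB : ℤ → ℝ := fun k => if 2*|(k:ℝ)| ≤ R then (1+|(k:ℝ)|) ^ (-b) else 0 with hgB
  set gC : ℤ → ℝ := fun m => if R < 2*|(m:ℝ)| then |(m:ℝ)| ^ (-(1+q)) else 0 with hgC
  have hgAnn : ∀ m : ℤ, 0 ≤ gA m := by
    intro m; simp only [hgA]; split
    · exact Real.rpow_nonneg (abs_nonneg _) _
    · exact le_rfl
  have hgBnn : ∀ k : ℤ, 0 ≤ gB k := by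
    intro k; simp only [hgB]; split
    · exact Real.rpow_nonneg (by positivity) _
    · exact le_rfl
  have hgCnn : ∀ m : ℤ, 0 ≤ gC m := by
    intro m; simp only [hgC]; split
    · exact Real.rpow_nonneg (abs_nonneg _) _
    · exact le_rfl
  have hcN : ∀ i : ℕ, |((i:ℤ):ℝ)| = (i:ℝ) := by
    intro i; rw [Int.cast_natCast]; exact Nat.abs_cast i
  have hcNeg : ∀ i : ℕ, |(((-((i:ℤ)+1)):ℤ):ℝ)| = (i:ℝ)+1 := by
    intro i; push_cast; rw [abs_neg, abs_of_nonneg (by positivity)]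
  -- gA bounds
  have hAcan : ∀ K : ℕ, ∑ i ∈ Finset.range K, (if 2*(i:ℝ) ≤ R then (i:ℝ) ^ (-a) else 0)
      ≤ (R/2)^(1-a)/(1-a) := kce_natA ha0 ha1 hR0.le
  have hAcan_nn : ∀ i : ℕ, 0 ≤ (if 2*(i:ℝ) ≤ R then (i:ℝ) ^ (-a) else 0) := by
    intro i; split
    · exact Real.rpow_nonneg (Nat.cast_nonneg _) _
    · exact le_rfl
  have hApos : ∀ K : ℕ, ∑ i ∈ Finset.range K, gA (i:ℤ) ≤ (R/2)^(1-a)/(1-a) := by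
    intro K
    refine le_trans (le_of_eq (Finset.sum_congr rfl fun i _ => ?_)) (hAcan K)
    simp only [hgA, hcN i]
  have hAneg : ∀ K : ℕ, ∑ i ∈ Finset.range K, gA (-((i:ℤ)+1)) ≤ (R/2)^(1-a)/(1-a) := by
    intro K
    have hsh := kce_shift_sum_le hAcan_nn hAcan K
    refine le_trans (le_of_eq (Finset.sum_congr rfl fun i _ => ?_)) hsh
    simp only [hgA, hcNeg i]
    push_cast
    rfl
  obtain ⟨SgA, TgA⟩ := kce_tsum_int_le gA hgAnn _ hApos hAneg
  -- gB bounds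
  have hBcan : ∀ K : ℕ, ∑ i ∈ Finset.range K, (if 2*(i:ℝ) ≤ R then (1+(i:ℝ)) ^ (-b) else 0)
      ≤ 1 + (R/2)^(1-b)/(1-b) := kce_natB hb0 hb1 hR0.le
  have hBcan_nn : ∀ i : ℕ, 0 ≤ (if 2*(i:ℝ) ≤ R then (1+(i:ℝ)) ^ (-b) else 0) := by
    intro i; split
    · exact Real.rpow_nonneg (by positivity) _
    · exact le_rfl
  have hBpos : ∀ K : ℕ, ∑ i ∈ Finset.range K, gB (i:ℤ) ≤ 1 + (R/2)^(1-b)/(1-b) := by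
    intro K
    refine le_trans (le_of_eq (Finset.sum_congr rfl fun i _ => ?_)) (hBcan K)
    simp only [hgB, hcN i]
  have hBneg : ∀ K : ℕ, ∑ i ∈ Finset.range K, gB (-((i:ℤ)+1)) ≤ 1 + (R/2)^(1-b)/(1-b) := by
    intro K
    have hsh := kce_shift_sum_le hBcan_nn hBcan K
    refine le_trans (le_of_eq (Finset.sum_congr rfl fun i _ => ?_)) hsh
    simp only [hgB, hcNeg i]
    push_cast
    rfl
  obtain ⟨SgB, TgB⟩ := kce_tsum_int_le gB hgBnn _ hBpos hBneg
  -- gC bounds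
  have hCcan : ∀ K : ℕ, ∑ i ∈ Finset.range K, (if R < 2*(i:ℝ) then (i:ℝ) ^ (-(1+q)) else 0)
      ≤ (R/4)^(-q)/q := kce_natC hq0 hq1 hR4
  have hCcan_nn : ∀ i : ℕ, 0 ≤ (if R < 2*(i:ℝ) then (i:ℝ) ^ (-(1+q)) else 0) := by
    intro i; split
    · exact Real.rpow_nonneg (Nat.cast_nonneg _) _
    · exact le_rfl
  have hCpos : ∀ K : ℕ, ∑ i ∈ Finset.range K, gC (i:ℤ) ≤ (R/4)^(-q)/q := by
    intro K
    refine le_trans (le_of_eq (Finset.sum_congr rfl fun i _ => ?_)) (hCcan K)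
    simp only [hgC, hcN i]
  have hCneg : ∀ K : ℕ, ∑ i ∈ Finset.range K, gC (-((i:ℤ)+1)) ≤ (R/4)^(-q)/q := by
    intro K
    have hsh := kce_shift_sum_le hCcan_nn hCcan K
    refine le_trans (le_of_eq (Finset.sum_congr rfl fun i _ => ?_)) hsh
    simp only [hgC, hcNeg i]
    push_cast
    rfl
  obtain ⟨SgC, TgC⟩ := kce_tsum_int_le gC hgCnn _ hCpos hCneg
  -- reindex gB
  have SgBc : Summable (fun m : ℤ => gB (n - m)) := by
    have h := (Equiv.subLeft n).summable_iff (f := gB)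
    simp only [Function.comp_def, Equiv.subLeft_apply] at h
    exact h.mpr SgB
  have TgBc : ∑' m : ℤ, gB (n - m) = ∑' k : ℤ, gB k := by
    have h := (Equiv.subLeft n).tsum_eq gB
    simpa only [Equiv.subLeft_apply] using h
  -- constants
  set cA := (R/2)^(-b) with hcA
  set cB := (R/2)^(-a) with hcB
  set cC := (3:ℝ)^b with hcC
  have hcA0 : 0 ≤ cA := by rw [hcA]; exact Real.rpow_nonneg hR20.le _
  have hcB0 : 0 ≤ cB := by rw [hcB]; exact Real.rpow_nonneg hR20.le _
  have hcC0 : 0 ≤ cC := by rw [hcC]; exact Real.rpow_nonneg (by norm_num) _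
  set H : ℤ → ℝ := fun m => cA * gA m + (cB * gB (n - m) + cC * gC m) with hH
  have hHnn : ∀ m : ℤ, 0 ≤ H m := by
    intro m
    simp only [hH]
    exact add_nonneg (mul_nonneg hcA0 (hgAnn m))
      (add_nonneg (mul_nonneg hcB0 (hgBnn _)) (mul_nonneg hcC0 (hgCnn m)))
  have SH : Summable H := by
    rw [hH]
    exact (SgA.mul_left cA).add ((SgBc.mul_left cB).add (SgC.mul_left cC))
  have hcast : ∀ m : ℤ, ((n - m : ℤ) : ℝ) = (n:ℝ) - (m:ℝ) := fun m => by push_cast; ring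
  -- key pointwise bound
  have key : ∀ m : ℤ, |(m:ℝ) * φ m * Δ2 (n - m)| ≤ c^2 * H m := by
    intro m
    rcases eq_or_ne m 0 with rfl | hm
    · simp only [Int.cast_zero, zero_mul, abs_zero]
      exact mul_nonneg (by positivity) (hHnn 0)
    · have hm1 : (1:ℝ) ≤ |(m:ℝ)| := by exact_mod_cast Int.one_le_abs hm
      have hm0 : (0:ℝ) < |(m:ℝ)| := lt_of_lt_of_le one_pos hm1
      have e2 : |(m:ℝ)| * |φ m| ≤ c * |(m:ℝ)| ^ (-a) := by
        calc |(m:ℝ)| * |φ m| ≤ |(m:ℝ)| * (c * |(m:ℝ)| ^ (δ-α)) :=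
              mul_le_mul_of_nonneg_left (hφ m hm) hm0.le
          _ = c * (|(m:ℝ)| ^ (δ-α) * |(m:ℝ)|) := by ring
          _ = c * |(m:ℝ)| ^ ((δ-α)+1) := by rw [Real.rpow_add_one hm0.ne']
          _ = c * |(m:ℝ)| ^ (-a) := by rw [show (δ-α)+1 = -a by rw [ha, hβ]; ring]
      have e3 : |Δ2 (n-m)| ≤ c * (1+|(n:ℝ)-(m:ℝ)|) ^ (-b) := by
        have h := hΔ2 (n-m)
        rw [hcast m] at h
        rw [show -b = δ - 1 by rw [hb']; ring]
        exact h
      have e1 : |(m:ℝ) * φ m * Δ2 (n-m)| ≤ (c * |(m:ℝ)| ^ (-a)) * (c * (1+|(n:ℝ)-(m:ℝ)|) ^ (-b)) := by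
        rw [abs_mul, abs_mul]
        exact mul_le_mul e2 e3 (abs_nonneg _)
          (mul_nonneg hc (Real.rpow_nonneg hm0.le _))
      have habs_nm : R ≤ |(m:ℝ)| + |(n:ℝ)-(m:ℝ)| := by
        have h5 := abs_sub_abs_le_abs_sub (n:ℝ) (m:ℝ)
        rw [← hR'] at h5
        linarith
      have hnm0 : (0:ℝ) ≤ |(n:ℝ)-(m:ℝ)| := abs_nonneg _
      have hG : |(m:ℝ)| ^ (-a) * (1+|(n:ℝ)-(m:ℝ)|) ^ (-b) ≤ H m := by
        by_cases h1 : 2*|(m:ℝ)| ≤ R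
        · have hd : R/2 ≤ 1 + |(n:ℝ)-(m:ℝ)| := by linarith
          have hgA_eq : gA m = |(m:ℝ)| ^ (-a) := by simp only [hgA]; exact if_pos h1
          have hBb : (1+|(n:ℝ)-(m:ℝ)|) ^ (-b) ≤ cA := by
            rw [hcA]
            exact Real.rpow_le_rpow_of_nonpos hR20 hd (by linarith)
          have hmain : |(m:ℝ)|^(-a) * (1+|(n:ℝ)-(m:ℝ)|)^(-b) ≤ cA * gA m := by
            rw [hgA_eq, mul_comm cA]
            exact mul_le_mul_of_nonneg_left hBb (Real.rpow_nonneg hm0.le _)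
          have h6 : 0 ≤ cB * gB (n-m) + cC * gC m :=
            add_nonneg (mul_nonneg hcB0 (hgBnn _)) (mul_nonneg hcC0 (hgCnn m))
          simp only [hH]
          linarith
        · by_cases h2 : 2*|(n:ℝ)-(m:ℝ)| ≤ R
          · have hm_big : R/2 ≤ |(m:ℝ)| := by linarith
            have hgB_eq : gB (n - m) = (1+|(n:ℝ)-(m:ℝ)|) ^ (-b) := by
              simp only [hgB, hcast m]
              exact if_pos h2
            have hBa : |(m:ℝ)|^(-a) ≤ cB := by
              rw [hcB]
              exact Real.rpow_le_rpow_of_nonpos hR20 hm_big (by linarith)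
            have hmain : |(m:ℝ)|^(-a) * (1+|(n:ℝ)-(m:ℝ)|)^(-b) ≤ cB * gB (n-m) := by
              rw [hgB_eq]
              exact mul_le_mul_of_nonneg_right hBa (Real.rpow_nonneg (by positivity) _)
            have h6 : 0 ≤ cA * gA m + cC * gC m :=
              add_nonneg (mul_nonneg hcA0 (hgAnn m)) (mul_nonneg hcC0 (hgCnn m))
            simp only [hH]
            linarith
          · push_neg at h1 h2
            have hgC_eq : gC m = |(m:ℝ)| ^ (-(1+q)) := by
              simp only [hgC]; exact if_pos (by linarith)
            have hub : |(m:ℝ)| ≤ 3*(1+|(n:ℝ)-(m:ℝ)|) := by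
              have h7 := abs_sub (n:ℝ) ((n:ℝ)-(m:ℝ))
              rw [show (n:ℝ) - ((n:ℝ)-(m:ℝ)) = (m:ℝ) by ring] at h7
              rw [← hR'] at h7
              linarith
            have h3b : (1+|(n:ℝ)-(m:ℝ)|) ^ (-b) ≤ (|(m:ℝ)|/3) ^ (-b) :=
              Real.rpow_le_rpow_of_nonpos (by positivity) (by linarith) (by linarith)
            have h3c : (|(m:ℝ)|/3) ^ (-b) = 3^b * |(m:ℝ)|^(-b) := by
              rw [Real.div_rpow (abs_nonneg _) (by norm_num : (0:ℝ) ≤ 3),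
                Real.rpow_neg (by norm_num : (0:ℝ) ≤ 3), div_inv_eq_mul, mul_comm]
            have h3d : |(m:ℝ)|^(-a) * |(m:ℝ)|^(-b) = |(m:ℝ)|^(-(1+q)) := by
              rw [← Real.rpow_add hm0]
              congr 1
              rw [ha, hb', hq']; ring
            have hmain : |(m:ℝ)|^(-a) * (1+|(n:ℝ)-(m:ℝ)|)^(-b) ≤ cC * gC m := by
              rw [hgC_eq, hcC]
              calc |(m:ℝ)|^(-a) * (1+|(n:ℝ)-(m:ℝ)|)^(-b)
                  ≤ |(m:ℝ)|^(-a) * ((|(m:ℝ)|/3) ^ (-b)) :=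
                    mul_le_mul_of_nonneg_left h3b (Real.rpow_nonneg hm0.le _)
                _ = 3^b * (|(m:ℝ)|^(-a) * |(m:ℝ)|^(-b)) := by rw [h3c]; ring
                _ = 3^b * |(m:ℝ)|^(-(1+q)) := by rw [h3d]
            have h6 : 0 ≤ cA * gA m + cB * gB (n-m) :=
              add_nonneg (mul_nonneg hcA0 (hgAnn m)) (mul_nonneg hcB0 (hgBnn _))
            simp only [hH]
            linarith
      calc |(m:ℝ) * φ m * Δ2 (n-m)| ≤ (c * |(m:ℝ)|^(-a)) * (c * (1+|(n:ℝ)-(m:ℝ)|)^(-b)) := e1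
        _ = c^2 * (|(m:ℝ)|^(-a) * (1+|(n:ℝ)-(m:ℝ)|)^(-b)) := by ring
        _ ≤ c^2 * H m := mul_le_mul_of_nonneg_left hG (by positivity)
  -- summability of the series
  have hFabs : Summable (fun m : ℤ => |(m:ℝ) * φ m * Δ2 (n - m)|) :=
    Summable.of_nonneg_of_le (fun m => abs_nonneg _) key (SH.mul_left (c^2))
  have h1 : |∑' m : ℤ, (m:ℝ) * φ m * Δ2 (n - m)| ≤ ∑' m : ℤ, |(m:ℝ) * φ m * Δ2 (n - m)| := by
    simpa only [Real.norm_eq_abs] using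
      norm_tsum_le_tsum_norm (f := fun m : ℤ => (m:ℝ) * φ m * Δ2 (n - m))
        (by simpa only [Real.norm_eq_abs] using hFabs)
  have h2 : ∑' m : ℤ, |(m:ℝ) * φ m * Δ2 (n - m)| ≤ ∑' m : ℤ, c^2 * H m :=
    Summable.tsum_le_tsum key hFabs (SH.mul_left _)
  have h3 : ∑' m : ℤ, c^2 * H m = c^2 * ∑' m : ℤ, H m := tsum_mul_left
  have h4 : ∑' m : ℤ, H m = cA * (∑' m : ℤ, gA m) + (cB * (∑' k : ℤ, gB k) + cC * (∑' m : ℤ, gC m)) := by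
    rw [hH, Summable.tsum_add (SgA.mul_left cA) ((SgBc.mul_left cB).add (SgC.mul_left cC)),
      Summable.tsum_add (SgBc.mul_left cB) (SgC.mul_left cC), tsum_mul_left, tsum_mul_left,
      tsum_mul_left, TgBc]
  -- rpow algebra
  have e2q : (R/2)^(-q) = 2^q * R^(-q) := by
    rw [Real.div_rpow hR0.le (by norm_num : (0:ℝ) ≤ 2),
      Real.rpow_neg (by norm_num : (0:ℝ) ≤ 2), div_inv_eq_mul, mul_comm]
  have e4q : (R/4)^(-q) = 4^q * R^(-q) := by
    rw [Real.div_rpow hR0.le (by norm_num : (0:ℝ) ≤ 4),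
      Real.rpow_neg (by norm_num : (0:ℝ) ≤ 4), div_inv_eq_mul, mul_comm]
  have eab : cA * (R/2)^(1-a) = (R/2)^(-q) := by
    rw [hcA, ← Real.rpow_add hR20]
    congr 1
    rw [hb', ha, hq']; ring
  have ebb : cB * (R/2)^(1-b) = (R/2)^(-q) := by
    rw [hcB, ← Real.rpow_add hR20]
    congr 1
    rw [hb', ha, hq']; ring
  have ecmp : cB ≤ (R/2)^(-q) := by
    rw [hcB]
    exact Real.rpow_le_rpow_of_exponent_le (by linarith) (by linarith)
  have boundA : cA * (∑' m : ℤ, gA m) ≤ 2 * 2^q / (1-a) * R^(-q) := by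
    calc cA * (∑' m : ℤ, gA m)
        ≤ cA * ((R/2)^(1-a)/(1-a) + (R/2)^(1-a)/(1-a)) := mul_le_mul_of_nonneg_left TgA hcA0
      _ = 2 * (cA * (R/2)^(1-a)) / (1-a) := by ring
      _ = 2 * (R/2)^(-q) / (1-a) := by rw [eab]
      _ = 2 * 2^q / (1-a) * R^(-q) := by rw [e2q]; ring
  have boundB : cB * (∑' k : ℤ, gB k) ≤ (2+2/(1-b)) * 2^q * R^(-q) := by
    have step : cB * (∑' k : ℤ, gB k) ≤ 2*cB + 2*(R/2)^(-q)/(1-b) := by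
      calc cB * (∑' k : ℤ, gB k)
          ≤ cB * ((1 + (R/2)^(1-b)/(1-b)) + (1 + (R/2)^(1-b)/(1-b))) :=
            mul_le_mul_of_nonneg_left TgB hcB0
        _ = 2*cB + 2*(cB * (R/2)^(1-b))/(1-b) := by ring
        _ = 2*cB + 2*(R/2)^(-q)/(1-b) := by rw [ebb]
    have h1b : (0:ℝ) < 1 - b := by rw [hb']; linarith
    have hd : 2*(R/2)^(-q)/(1-b) = 2/(1-b) * (R/2)^(-q) := by ring
    calc cB * (∑' k : ℤ, gB k) ≤ 2*cB + 2*(R/2)^(-q)/(1-b) := step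
      _ ≤ 2*(R/2)^(-q) + 2*(R/2)^(-q)/(1-b) := by
          have := ecmp; linarith
      _ = (2+2/(1-b)) * (R/2)^(-q) := by ring
      _ = (2+2/(1-b)) * 2^q * R^(-q) := by rw [e2q]; ring
  have boundC : cC * (∑' m : ℤ, gC m) ≤ 2*3^b*4^q/q * R^(-q) := by
    calc cC * (∑' m : ℤ, gC m)
        ≤ cC * ((R/4)^(-q)/q + (R/4)^(-q)/q) := mul_le_mul_of_nonneg_left TgC hcC0
      _ = 2 * cC * (R/4)^(-q) / q := by ring
      _ = 2*3^b*4^q/q * R^(-q) := by rw [hcC, e4q]; ring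
  have final : |∑' m : ℤ, (m:ℝ) * φ m * Δ2 (n - m)|
      ≤ c^2 * (2*2^q/(1-a) + (2+2/(1-b))*2^q + 2*3^b*4^q/q) * R^(-q) := by
    calc |∑' m : ℤ, (m:ℝ) * φ m * Δ2 (n - m)|
        ≤ ∑' m : ℤ, |(m:ℝ) * φ m * Δ2 (n - m)| := h1
      _ ≤ ∑' m : ℤ, c^2 * H m := h2
      _ = c^2 * ∑' m : ℤ, H m := h3
      _ = c^2 * (cA * (∑' m : ℤ, gA m) + (cB * (∑' k : ℤ, gB k) + cC * (∑' m : ℤ, gC m))) := by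
          rw [h4]
      _ ≤ c^2 * (2 * 2^q / (1-a) * R^(-q) + ((2+2/(1-b)) * 2^q * R^(-q) + 2*3^b*4^q/q * R^(-q))) := by
          refine mul_le_mul_of_nonneg_left ?_ (by positivity)
          exact add_le_add boundA (add_le_add boundB boundC)
      _ = c^2 * (2*2^q/(1-a) + (2+2/(1-b))*2^q + 2*3^b*4^q/q) * R^(-q) := by ring
  have hexp : R^(-q) = Real.rpow R (2*δ-β) := by
    rw [Real.rpow_eq_pow]
    congr 1
    rw [hq']; ring
  rw [hexp] at final
  exact final
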